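/- Let n, φ, T ∈ ℕ and δ ≥ 0. Let X₊ ∈ ℝ^{n×T}, Ξ₁, Ξ₂ ∈ ℝ^{φ×T}, C₁, C₂ ∈ ℝ^{n×φ}, and W ∈ ℝ^{n×T} be matrices such that X₊ = C₁Ξ₁ + C₂Ξ₂ + W and T·δ·I_n − W·Wᵀ is positive semidefinite. Define the symmetric matrix 𝓢 ∈ ℝ^{(n+2φ)×(n+2φ)} as the 3×3 block matrix with blocks 𝓢₁₁ = X₊X₊ᵀ − TδI_n, 𝓢₁₂ = −X₊Ξ₁ᵀ, 𝓢₁₃ = −X₊Ξ₂ᵀ, 𝓢₂₂ = Ξ₁Ξ₁ᵀ, 𝓢₂₃ = Ξ₁Ξ₂ᵀ, 𝓢₃₃ = Ξ₂Ξ₂ᵀ (and symmetric transposed blocks below the diagonal), and let ℵ ∈ ℝ^{(n+2φ)×n} be the vertical stacking of I_n, C₁ᵀ, and C₂ᵀ. Then ℵᵀ·𝓢·ℵ = W·Wᵀ − TδI_n, and in particular ℵᵀ·𝓢·ℵ is negative semidefinite. -/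

import Mathlib

open Matrix

/-- **Quadratic data-consistency constraint.**
If `Xp = C₁Ξ₁ + C₂Ξ₂ + W` with `TδI_n - WWᵀ ⪰ 0`, then for the 3×3 block data
matrix `𝓢` and `ℵ = [I_n; C₁ᵀ; C₂ᵀ]` one has `ℵᵀ𝓢ℵ = WWᵀ - TδI_n`, which is
negative semidefinite. -/
theorem stmt10
    (n φ T : ℕ) (δ : ℝ) (hδ : 0 ≤ δ)
    (Xp : Matrix (Fin n) (Fin T) ℝ)
    (Ξ₁ Ξ₂ : Matrix (Fin φ) (Fin T) ℝ)
    (C₁ C₂ : Matrix (Fin n) (Fin φ) ℝ)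
    (W : Matrix (Fin n) (Fin T) ℝ)
    (hdata : Xp = C₁ * Ξ₁ + C₂ * Ξ₂ + W)
    (hW : ((T : ℝ) • δ • (1 : Matrix (Fin n) (Fin n) ℝ) - W * Wᵀ).PosSemidef)
    (𝓢 : Matrix (Fin n ⊕ (Fin φ ⊕ Fin φ)) (Fin n ⊕ (Fin φ ⊕ Fin φ)) ℝ)
    (h𝓢 : 𝓢 = fromBlocks
      (Xp * Xpᵀ - (T : ℝ) • δ • (1 : Matrix (Fin n) (Fin n) ℝ))
      (fromCols (-(Xp * Ξ₁ᵀ)) (-(Xp * Ξ₂ᵀ)))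
      (fromRows (-(Ξ₁ * Xpᵀ)) (-(Ξ₂ * Xpᵀ)))
      (fromBlocks (Ξ₁ * Ξ₁ᵀ) (Ξ₁ * Ξ₂ᵀ) (Ξ₂ * Ξ₁ᵀ) (Ξ₂ * Ξ₂ᵀ)))
    (ℵ : Matrix (Fin n ⊕ (Fin φ ⊕ Fin φ)) (Fin n) ℝ)
    (hℵ : ℵ = fromRows (1 : Matrix (Fin n) (Fin n) ℝ) (fromRows C₁ᵀ C₂ᵀ)) :
    ℵᵀ * 𝓢 * ℵ = W * Wᵀ - (T : ℝ) • δ • (1 : Matrix (Fin n) (Fin n) ℝ) ∧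
    (-(ℵᵀ * 𝓢 * ℵ)).PosSemidef := by
  have key : ℵᵀ * 𝓢 * ℵ = W * Wᵀ - (T : ℝ) • δ • (1 : Matrix (Fin n) (Fin n) ℝ) := by
    subst h𝓢 hℵ hdata
    simp only [transpose_fromRows, transpose_one, fromCols_mul_fromBlocks,
      fromBlocks_mul_fromRows, fromCols_mul_fromRows, Matrix.mul_one, Matrix.one_mul,
      transpose_add, transpose_mul, Matrix.add_mul, Matrix.mul_add, Matrix.neg_mul,
      Matrix.mul_neg, Matrix.sub_mul, Matrix.mul_sub]
    simp only [transpose_transpose, Matrix.mul_assoc]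
    abel
  refine ⟨key, ?_⟩
  rw [key, neg_sub]
  exact hW
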